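/- Let r ≥ t ≥ 1 be integers. If M is a finite loopless matroid of rank r with no (t+1)-claw, then the ground set of M has at least 2r − t elements. -/

import Mathlib

/-- A matroid is *loopless* if every single element of the ground set is independent. -/
def Matroid.IsLoopless {α : Type*} (M : Matroid α) : Prop :=
  ∀ e ∈ M.E, M.Indep {e}

/-- A *claw* of a matroid is a set that is both a flat and independent. -/
def Matroid.IsClaw {α : Type*} (M : Matroid α) (S : Set α) : Prop :=
  M.IsFlat S ∧ M.Indep S

open Set

/-- The closure of any set is a flat. -/
lemma Matroid.flat_closure_aux {α : Type*} (M : Matroid α) (X : Set α) :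
    M.IsFlat (M.closure X) := by
  rw [Matroid.closure_def, sInter_eq_iInter]
  have : Nonempty {F // F ∈ {F | M.IsFlat F ∧ X ∩ M.E ⊆ F}} :=
    ⟨⟨M.E, M.ground_isFlat, inter_subset_right⟩⟩
  exact Matroid.IsFlat.iInter fun F ↦ F.2.1

/-- An independent set contained in the closure of `X` has cardinality at most that of `X`. -/
lemma Matroid.indep_encard_le_of_subset_closure {α : Type*} {M : Matroid α} {I X : Set α}
    (hI : M.Indep I) (hIX : I ⊆ M.closure X) (hX : X ⊆ M.E) : I.encard ≤ X.encard := by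
  obtain ⟨J, hJ⟩ := M.exists_isBasis X hX
  obtain ⟨J', hJ', hIJ'⟩ := hI.subset_isBasis_of_subset hIX (M.closure_subset_ground X)
  calc I.encard ≤ J'.encard := encard_mono hIJ'
    _ = J.encard := hJ'.encard_eq_encard hJ.isBasis_closure_right
    _ ≤ X.encard := encard_mono hJ.subset

/-- For `r ≥ t ≥ 1`, a finite loopless matroid of rank `r` with no `(t+1)`-claw
has at least `2r − t` elements. -/
theorem loopless_claw_free_lower_bound {α : Type*} (r t : ℕ) (ht : 1 ≤ t) (hrt : t ≤ r)
    (M : Matroid α) (hfin : M.E.Finite) (hloopless : M.IsLoopless)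
    (hrank : ∃ B, M.IsBase B ∧ B.ncard = r)
    (hclaw : ¬ ∃ S, M.IsClaw S ∧ S.ncard = t + 1) :
    2 * r - t ≤ M.E.ncard := by
  classical
  obtain ⟨B₀, hB₀, hB₀card⟩ := hrank
  -- the empty set is a claw, since `M` is loopless
  have hcl_empty : M.closure ∅ = ∅ := by
    ext e
    simp only [Set.mem_empty_iff_false, iff_false]
    intro he
    have heE : e ∈ M.E := M.closure_subset_ground ∅ he
    rw [M.empty_indep.mem_closure_iff] at he
    rcases he with h | h
    · exact h.not_indep (by simpa using hloopless e heE)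
    · exact h
  have hclaw_empty : M.IsClaw ∅ := by
    refine ⟨?_, M.empty_indep⟩
    have := M.flat_closure_aux ∅
    rwa [hcl_empty] at this
  -- the predicate "there is a claw of size n"
  set P : ℕ → Prop := fun n ↦ ∃ S, M.IsClaw S ∧ S.ncard = n with hP
  set k : ℕ := Nat.findGreatest P t with hkdef
  have hP0 : P 0 := ⟨∅, hclaw_empty, by simp⟩
  have hkP : P k := Nat.findGreatest_spec (Nat.zero_le t) hP0
  have hkt : k ≤ t := Nat.findGreatest_le t
  obtain ⟨S, hS, hScard⟩ := hkP
  have hSE : S ⊆ M.E := hS.1.subset_ground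
  have hSfin : S.Finite := hfin.subset hSE
  -- no claw of size `k+1` exists
  have hnoclaw : ∀ S', M.IsClaw S' → S'.ncard ≠ k + 1 := by
    intro S' hS' hS'card
    rcases eq_or_lt_of_le hkt with hkeq | hklt
    · exact hclaw ⟨S', hS', by rw [hS'card, hkeq]⟩
    · have : k + 1 ≤ k := Nat.le_findGreatest hklt ⟨S', hS', hS'card⟩
      omega
  -- extend `S` to a base `B`
  obtain ⟨B, hB, hSB⟩ := hS.2.exists_isBase_superset
  have hBE : B ⊆ M.E := hB.subset_ground
  have hBfin : B.Finite := hfin.subset hBE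
  have hBcard : B.ncard = r := by rw [hB.ncard_eq_ncard_of_isBase hB₀, hB₀card]
  -- for each e ∈ B \ S there is an element of the closure of `insert e S` outside `B`
  have key : ∀ e ∈ B \ S, ∃ f, f ∈ M.closure (insert e S) ∧ f ∉ S ∧ f ≠ e ∧ f ∈ M.E ∧ f ∉ B := by
    rintro e ⟨heB, heS⟩
    have hins_indep : M.Indep (insert e S) :=
      hB.indep.subset (insert_subset heB hSB)
    have hinsE : insert e S ⊆ M.E := hins_indep.subset_ground
    -- `insert e S` is not a flat
    have hnotflat : ¬ M.IsFlat (insert e S) := by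
      intro hflat
      exact hnoclaw _ ⟨hflat, hins_indep⟩ (by rw [ncard_insert_of_notMem heS hSfin, hScard])
    have hne : M.closure (insert e S) ≠ insert e S := by
      intro hcl
      have := M.flat_closure_aux (insert e S)
      rw [hcl] at this
      exact hnotflat this
    have hssub : insert e S ⊂ M.closure (insert e S) :=
      (M.subset_closure _ hinsE).ssubset_of_ne (Ne.symm hne)
    obtain ⟨f, hfcl, hfns⟩ := exists_of_ssubset hssub
    have hfE : f ∈ M.E := M.closure_subset_ground _ hfcl
    have hfne : f ≠ e := fun h ↦ hfns (h ▸ mem_insert _ _)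
    have hfS : f ∉ S := fun h ↦ hfns (mem_insert_of_mem _ h)
    refine ⟨f, hfcl, hfS, hfne, hfE, fun hfB ↦ ?_⟩
    have : M.Indep (insert f (insert e S)) :=
      hB.indep.subset (insert_subset hfB (insert_subset heB hSB))
    rw [hins_indep.insert_indep_iff_of_notMem hfns] at this
    exact this.2 hfcl
  -- choose such an element for each `e`
  choose! f hf1 hf2 hf3 hf4 hf5 using key
  -- the chosen elements are distinct
  have hinj : Set.InjOn f (B \ S) := by
    intro e he e' he' hee'
    by_contra hne
    have hScl : M.closure S = S := hS.1.closure
    have hfe_cl : f e ∈ M.closure (insert e S) \ M.closure S := by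
      rw [hScl]; exact ⟨hf1 e he, hf2 e he⟩
    have hfe'_cl : f e ∈ M.closure (insert e' S) \ M.closure S := by
      rw [hScl, hee']; exact ⟨hf1 e' he', hf2 e' he'⟩
    have he_cl : e ∈ M.closure (insert (f e) S) :=
      (Matroid.closure_exchange hfe_cl).1
    have he'_cl : e' ∈ M.closure (insert (f e) S) :=
      (hee' ▸ (Matroid.closure_exchange hfe'_cl).1)
    -- `insert e (insert e' S)` is independent and lies in the closure of `insert (f e) S`
    have hI_indep : M.Indep (insert e (insert e' S)) :=
      hB.indep.subset (insert_subset he.1 (insert_subset he'.1 hSB))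
    have hfeE : f e ∈ M.E := hf4 e he
    have hXE : insert (f e) S ⊆ M.E := insert_subset hfeE hSE
    have hIsub : insert e (insert e' S) ⊆ M.closure (insert (f e) S) := by
      refine insert_subset he_cl (insert_subset he'_cl ?_)
      exact (M.subset_closure_of_subset (subset_insert _ _) hXE)
    have hcard := Matroid.indep_encard_le_of_subset_closure hI_indep hIsub hXE
    have heS : e ∉ S := he.2
    have he'S : e' ∉ S := he'.2
    have heI : e ∉ insert e' S := by
      simp only [mem_insert_iff, not_or]; exact ⟨hne, heS⟩
    have hfeS : f e ∉ S := hf2 e he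
    rw [encard_insert_of_notMem heI, encard_insert_of_notMem he'S,
      encard_insert_of_notMem hfeS] at hcard
    set n := hSfin.toFinset.card with hndef
    have hn : S.encard = (n : ℕ∞) := hSfin.encard_eq_coe_toFinset_card
    rw [hn] at hcard
    have : (n : ℕ∞) + 1 + 1 ≤ (n : ℕ∞) + 1 := hcard
    have h2 : (n + 2 : ℕ) ≤ n + 1 := by exact_mod_cast (by push_cast; ring_nf; ring_nf at this; exact this : ((n + 2 : ℕ) : ℕ∞) ≤ ((n + 1 : ℕ) : ℕ∞))
    omega
  -- count
  have hmaps : Set.MapsTo f (B \ S) (M.E \ B) := fun e he ↦ ⟨hf4 e he, hf5 e he⟩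
  have hcount : (B \ S).ncard ≤ (M.E \ B).ncard :=
    Set.ncard_le_ncard_of_injOn f hmaps hinj (hfin.diff (t := B))
  have hBS : (B \ S).ncard = r - k := by
    rw [ncard_diff hSB (hBfin.subset hSB), hBcard, hScard]
  have hEB : (M.E \ B).ncard + B.ncard = M.E.ncard :=
    Set.ncard_diff_add_ncard_of_subset hBE hfin
  have hkr : k ≤ r := hkt.trans hrt
  omega
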